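/- arXiv:2603.17335 — 4 statements merged into one kernel-verified Lean document; each statement's English description precedes it below -/
import Mathlib

section
/- Let Θ be a finite set of targets with |Θ| = m > 0, let V be a finite set of sensing actions, and for each a ∈ V let S(a) ⊆ Θ be the set of targets covered by a. Define the coverage utility f(A) = |⋃_{a∈A} S(a)| / m for A ⊆ V, and write f(s|A) := f(A ∪ {s}) − f(A) for the marginal gain. Then f is 2nd-order submodular: for all pairwise disjoint A, B, C ⊆ V and all s ∈ V, f(s|C) − f(s|A ∪ C) ≥ f(s|B ∪ C) − f(s|A ∪ B ∪ C). -/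
/-- **Coverage utility is 2nd-order submodular.**
With f(A) = |⋃_{a∈A} S(a)| / m and marginal gain f(s|A) = f(A ∪ {s}) − f(A),
for all pairwise disjoint A, B, C ⊆ V and all s ∈ V:
f(s|C) − f(s|A ∪ C) ≥ f(s|B ∪ C) − f(s|A ∪ B ∪ C). -/
theorem coverage_second_order_submodular {α β : Type*} [DecidableEq α] [DecidableEq β]
    (Θ : Finset β) (m : ℕ) (hm : m = Θ.card) (hm0 : 0 < m)
    (V : Finset α) (S : α → Finset β) (hS : ∀ a ∈ V, S a ⊆ Θ)
    (f : Finset α → ℝ)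
    (hf : ∀ A : Finset α, f A = ((A.biUnion S).card : ℝ) / m) :
    ∀ A B C : Finset α, A ⊆ V → B ⊆ V → C ⊆ V →
      Disjoint A B → Disjoint A C → Disjoint B C → ∀ s ∈ V,
      (f (C ∪ {s}) - f C) - (f (A ∪ C ∪ {s}) - f (A ∪ C)) ≥
        (f (B ∪ C ∪ {s}) - f (B ∪ C)) - (f (A ∪ B ∪ C ∪ {s}) - f (A ∪ B ∪ C)) := by
  intro A B C _ _ _ _ _ _ s _
  set T := S s with hT
  -- marginal gain formula
  have bu : ∀ X Y : Finset α, (X ∪ Y).biUnion S = X.biUnion S ∪ Y.biUnion S := by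
    intro X Y; ext t; simp [Finset.mem_biUnion, Finset.mem_union, or_and_right, exists_or]
  have key : ∀ X : Finset α, f (X ∪ {s}) - f X = ((T \ X.biUnion S).card : ℝ) / m := by
    intro X
    rw [hf, hf, bu, Finset.singleton_biUnion, div_sub_div_same]
    congr 1
    have h : (T \ X.biUnion S).card + (X.biUnion S).card = (X.biUnion S ∪ T).card := by
      rw [Finset.union_comm]; exact Finset.card_sdiff_add_card T (X.biUnion S)
    rw [← hT, ← h]; push_cast; ring
  rw [key, key, key, key]
  set UA := A.biUnion S
  set UB := B.biUnion S
  set UC := C.biUnion S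
  have hAC : (A ∪ C).biUnion S = UA ∪ UC := bu A C
  have hBC : (B ∪ C).biUnion S = UB ∪ UC := bu B C
  have hABC : (A ∪ B ∪ C).biUnion S = UA ∪ UB ∪ UC := by
    rw [bu, bu]
  rw [hAC, hBC, hABC]
  -- partition identities in ℕ
  have part : ∀ X : Finset β, (T \ (UA ∪ X)).card + ((T \ X) ∩ UA).card = (T \ X).card := by
    intro X
    have : T \ (UA ∪ X) = (T \ X) \ UA := by
      ext t; simp; tauto
    rw [this]
    exact Finset.card_sdiff_add_card_inter (T \ X) UA
  have h1 := part UC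
  have hassoc : UA ∪ UB ∪ UC = UA ∪ (UB ∪ UC) := Finset.union_assoc UA UB UC
  have h2 : (T \ (UA ∪ (UB ∪ UC))).card + ((T \ (UB ∪ UC)) ∩ UA).card
      = (T \ (UB ∪ UC)).card := part (UB ∪ UC)
  have hsub : ((T \ (UB ∪ UC)) ∩ UA).card ≤ ((T \ UC) ∩ UA).card := by
    apply Finset.card_le_card
    apply Finset.inter_subset_inter_right
    exact Finset.sdiff_subset_sdiff le_rfl Finset.subset_union_right
  rw [hassoc]
  rw [ge_iff_le, div_sub_div_same, div_sub_div_same, div_le_div_iff_of_pos_right (by exact_mod_cast hm0)]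
  have := Nat.cast_le (α := ℝ) |>.mpr hsub
  push_cast [← h1, ← h2] at *
  linarith
end

section
/- Let V be a finite ground set and let f : 2^V → ℝ be a normalized, monotone, submodular, and 2nd-order submodular set function. Fix an element a ∈ V and define the Value of Coordination g(N) = f({a}) − [f(N ∪ {a}) − f(N)] for N ⊆ V \ {a}. Then g is submodular as a function of N: for all N ⊆ N' ⊆ V \ {a} and every j ∈ (V \ {a}) \ N', g(N ∪ {j}) − g(N) ≥ g(N' ∪ {j}) − g(N'). -/
/-- **Value of Coordination is submodular.**
Let f : 2^V → ℝ be normalized, monotone, submodular, and 2nd-order submodular,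
fix a ∈ V, and define g(N) = f({a}) − [f(N ∪ {a}) − f(N)] for N ⊆ V \ {a}.
Then g is submodular in N: for all N ⊆ N' ⊆ V \ {a} and j ∈ (V \ {a}) \ N',
g(N ∪ {j}) − g(N) ≥ g(N' ∪ {j}) − g(N'). -/
theorem voc_submodular {α : Type*} [DecidableEq α]
    (V : Finset α) (f : Finset α → ℝ)
    (hnorm : f ∅ = 0)
    (hmono : ∀ A B : Finset α, A ⊆ B → B ⊆ V → f A ≤ f B)
    (hsub : ∀ A B : Finset α, A ⊆ B → B ⊆ V → ∀ s ∈ V,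
      f (A ∪ {s}) - f A ≥ f (B ∪ {s}) - f B)
    (hsub2 : ∀ A B C : Finset α, A ⊆ V → B ⊆ V → C ⊆ V →
      Disjoint A B → Disjoint A C → Disjoint B C → ∀ s ∈ V,
      (f (C ∪ {s}) - f C) - (f (A ∪ C ∪ {s}) - f (A ∪ C)) ≥
        (f (B ∪ C ∪ {s}) - f (B ∪ C)) - (f (A ∪ B ∪ C ∪ {s}) - f (A ∪ B ∪ C)))
    (a : α) (ha : a ∈ V)
    (g : Finset α → ℝ)
    (hg : ∀ N : Finset α, g N = f {a} - (f (N ∪ {a}) - f N)) :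
    ∀ N N' : Finset α, N ⊆ N' → N' ⊆ V \ {a} → ∀ j ∈ (V \ {a}) \ N',
      g (N ∪ {j}) - g N ≥ g (N' ∪ {j}) - g N' := by
  intro N N' hNN' hN'V j hj
  have hjV : j ∈ V := (Finset.mem_sdiff.mp (Finset.mem_sdiff.mp hj).1).1
  have hjN' : j ∉ N' := (Finset.mem_sdiff.mp hj).2
  have hjN : j ∉ N := fun h => hjN' (hNN' h)
  have hAV : N' \ N ⊆ V := fun x hx =>
    (Finset.mem_sdiff.mp (hN'V (Finset.mem_sdiff.mp hx).1)).1
  have hBV : ({j} : Finset α) ⊆ V := by simp [hjV]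
  have hCV : N ⊆ V := fun x hx => (Finset.mem_sdiff.mp (hN'V (hNN' hx))).1
  have hAB : Disjoint (N' \ N) ({j} : Finset α) := by
    simp [Finset.disjoint_singleton_right, hjN']
  have hAC : Disjoint (N' \ N) N := Finset.sdiff_disjoint
  have hBC : Disjoint ({j} : Finset α) N := by
    simp [Finset.disjoint_singleton_left, hjN]
  have key := hsub2 (N' \ N) {j} N hAV hBV hCV hAB hAC hBC a ha
  have e1 : N' \ N ∪ N = N' := Finset.sdiff_union_of_subset hNN'
  have e2 : N' \ N ∪ {j} ∪ N = N' ∪ {j} := by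
    rw [Finset.union_right_comm, e1]
  rw [e1, e2] at key
  rw [hg (N ∪ {j}), hg N, hg (N' ∪ {j}), hg N']
  have e3 : N ∪ {j} ∪ {a} = {j} ∪ N ∪ {a} := by
    rw [Finset.union_comm N {j}]
  have e4 : N ∪ {j} = {j} ∪ N := Finset.union_comm _ _
  rw [e3, e4]
  linarith [key]
end

section
/- Let X and Y be nonempty finite sets, G : X × Y → ℝ a payoff matrix, and u(x,y) = Σ_{a∈X} Σ_{b∈Y} x(a) G(a,b) y(b) for mixed strategies x on X and y on Y. Let (x_1,…,x_T) and (y_1,…,y_T) be sequences of mixed strategies, with T ≥ 1, and let ε₁, ε₂ ≥ 0. Suppose the maximizer's average regret satisfies (1/T)[max_{x} Σ_{t=1}^T u(x, y_t) − Σ_{t=1}^T u(x_t, y_t)] ≤ ε₁ and the minimizer's average regret satisfies (1/T)[Σ_{t=1}^T u(x_t, y_t) − min_{y} Σ_{t=1}^T u(x_t, y)] ≤ ε₂. Then the time-averaged strategies x̄ = (1/T)Σ_t x_t and ȳ = (1/T)Σ_t y_t satisfy max_{x} u(x, ȳ) − min_{y} u(x̄, y) ≤ ε₁ + ε₂; in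 particular, (x̄, ȳ) is an (ε₁+ε₂)-Nash equilibrium of the zero-sum game. -/
/-- A mixed strategy on a finite action set: a probability distribution. -/
def IsMixed {X : Type*} [Fintype X] (p : X → ℝ) : Prop :=
  (∀ a, 0 ≤ p a) ∧ (∑ a, p a) = 1

section Aux

variable {X Y : Type*} [Fintype X] [Fintype Y]

lemma aux_left (G : X → Y → ℝ) (T : ℕ) (x' : X → ℝ) (y : Fin T → Y → ℝ) :
    ∑ a, ∑ b, x' a * G a b * ((1 / (T:ℝ)) * ∑ t, y t b)
      = (1/(T:ℝ)) * ∑ t, ∑ a, ∑ b, x' a * G a b * y t b := by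
  calc ∑ a, ∑ b, x' a * G a b * ((1 / (T:ℝ)) * ∑ t, y t b)
      = ∑ a, ∑ b, ∑ t, (1/(T:ℝ)) * (x' a * G a b * y t b) := by
        refine Finset.sum_congr rfl fun a _ => Finset.sum_congr rfl fun b _ => ?_
        rw [Finset.mul_sum, Finset.mul_sum]
        exact Finset.sum_congr rfl fun t _ => by ring
    _ = ∑ a, ∑ t, ∑ b, (1/(T:ℝ)) * (x' a * G a b * y t b) := by
        exact Finset.sum_congr rfl fun a _ => Finset.sum_comm
    _ = ∑ t, ∑ a, ∑ b, (1/(T:ℝ)) * (x' a * G a b * y t b) := Finset.sum_comm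
    _ = (1/(T:ℝ)) * ∑ t, ∑ a, ∑ b, x' a * G a b * y t b := by
        rw [Finset.mul_sum]
        refine Finset.sum_congr rfl fun t _ => ?_
        rw [Finset.mul_sum]
        refine Finset.sum_congr rfl fun a _ => ?_
        rw [Finset.mul_sum]

lemma aux_right (G : X → Y → ℝ) (T : ℕ) (y' : Y → ℝ) (x : Fin T → X → ℝ) :
    ∑ a, ∑ b, ((1 / (T:ℝ)) * ∑ t, x t a) * G a b * y' b
      = (1/(T:ℝ)) * ∑ t, ∑ a, ∑ b, x t a * G a b * y' b := by
  calc ∑ a, ∑ b, ((1 / (T:ℝ)) * ∑ t, x t a) * G a b * y' b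
      = ∑ a, ∑ b, ∑ t, (1/(T:ℝ)) * (x t a * G a b * y' b) := by
        refine Finset.sum_congr rfl fun a _ => Finset.sum_congr rfl fun b _ => ?_
        rw [Finset.mul_sum, Finset.sum_mul, Finset.sum_mul]
        exact Finset.sum_congr rfl fun t _ => by ring
    _ = ∑ a, ∑ t, ∑ b, (1/(T:ℝ)) * (x t a * G a b * y' b) := by
        exact Finset.sum_congr rfl fun a _ => Finset.sum_comm
    _ = ∑ t, ∑ a, ∑ b, (1/(T:ℝ)) * (x t a * G a b * y' b) := Finset.sum_comm
    _ = (1/(T:ℝ)) * ∑ t, ∑ a, ∑ b, x t a * G a b * y' b := by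
        rw [Finset.mul_sum]
        refine Finset.sum_congr rfl fun t _ => ?_
        rw [Finset.mul_sum]
        refine Finset.sum_congr rfl fun a _ => ?_
        rw [Finset.mul_sum]

lemma aux_ub [Nonempty X] [Nonempty Y] (G : X → Y → ℝ) (x' : X → ℝ) (y' : Y → ℝ)
    (hx' : IsMixed x') (hy' : IsMixed y') :
    ∑ a, ∑ b, x' a * G a b * y' b
      ≤ (Finset.univ ×ˢ Finset.univ).sup' (by simp) (fun p : X × Y => G p.1 p.2) := by
  set M := (Finset.univ ×ˢ Finset.univ).sup' (by simp) (fun p : X × Y => G p.1 p.2) with hM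
  have hGM : ∀ a b, G a b ≤ M := fun a b =>
    Finset.le_sup' (f := fun p : X × Y => G p.1 p.2) (b := (a, b)) (by simp)
  calc ∑ a, ∑ b, x' a * G a b * y' b
      ≤ ∑ a, ∑ b, x' a * M * y' b := by
        refine Finset.sum_le_sum fun a _ => Finset.sum_le_sum fun b _ => ?_
        exact mul_le_mul_of_nonneg_right
          (mul_le_mul_of_nonneg_left (hGM a b) (hx'.1 a)) (hy'.1 b)
    _ = M := by
        have : ∀ a, ∑ b, x' a * M * y' b = x' a * M := by
          intro a; rw [← Finset.mul_sum, hy'.2, mul_one]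
        simp only [this]
        rw [← Finset.sum_mul, hx'.2, one_mul]

lemma aux_lb [Nonempty X] [Nonempty Y] (G : X → Y → ℝ) (x' : X → ℝ) (y' : Y → ℝ)
    (hx' : IsMixed x') (hy' : IsMixed y') :
    (Finset.univ ×ˢ Finset.univ).inf' (by simp) (fun p : X × Y => G p.1 p.2)
      ≤ ∑ a, ∑ b, x' a * G a b * y' b := by
  set m := (Finset.univ ×ˢ Finset.univ).inf' (by simp) (fun p : X × Y => G p.1 p.2) with hm
  have hGm : ∀ a b, m ≤ G a b := fun a b =>
    Finset.inf'_le (f := fun p : X × Y => G p.1 p.2) (b := (a, b)) (by simp)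
  calc ∑ a, ∑ b, x' a * G a b * y' b
      ≥ ∑ a, ∑ b, x' a * m * y' b := by
        refine Finset.sum_le_sum fun a _ => Finset.sum_le_sum fun b _ => ?_
        exact mul_le_mul_of_nonneg_right
          (mul_le_mul_of_nonneg_left (hGm a b) (hx'.1 a)) (hy'.1 b)
    _ = m := by
        have : ∀ a, ∑ b, x' a * m * y' b = x' a * m := by
          intro a; rw [← Finset.mul_sum, hy'.2, mul_one]
        simp only [this]
        rw [← Finset.sum_mul, hx'.2, one_mul]

end Aux

/-- **No-regret play yields an approximate Nash equilibrium.**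
For a finite zero-sum game with payoff u(x,y) = Σ_a Σ_b x(a) G(a,b) y(b):
if the maximizer's average regret is at most ε₁ and the minimizer's average
regret is at most ε₂ over T rounds, then the time-averaged strategies
x̄ = (1/T)Σ_t x_t and ȳ = (1/T)Σ_t y_t have duality gap at most ε₁ + ε₂ and
form an (ε₁+ε₂)-Nash equilibrium. -/
theorem no_regret_implies_epsilon_NE {X Y : Type*} [Fintype X] [Fintype Y]
    [Nonempty X] [Nonempty Y]
    (G : X → Y → ℝ)
    (u : (X → ℝ) → (Y → ℝ) → ℝ)
    (hu : ∀ x y, u x y = ∑ a, ∑ b, x a * G a b * y b)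
    (T : ℕ) (hT : 1 ≤ T)
    (x : Fin T → X → ℝ) (y : Fin T → Y → ℝ)
    (hx : ∀ t, IsMixed (x t)) (hy : ∀ t, IsMixed (y t))
    (ε₁ ε₂ : ℝ) (hε₁ : 0 ≤ ε₁) (hε₂ : 0 ≤ ε₂)
    (hreg₁ : (1 / (T : ℝ)) *
        (sSup {v : ℝ | ∃ x' : X → ℝ, IsMixed x' ∧ v = ∑ t, u x' (y t)} -
          ∑ t, u (x t) (y t)) ≤ ε₁)
    (hreg₂ : (1 / (T : ℝ)) *
        ((∑ t, u (x t) (y t)) -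
          sInf {v : ℝ | ∃ y' : Y → ℝ, IsMixed y' ∧ v = ∑ t, u (x t) y'}) ≤ ε₂)
    (xbar : X → ℝ) (hxbar : xbar = fun a => (1 / (T : ℝ)) * ∑ t, x t a)
    (ybar : Y → ℝ) (hybar : ybar = fun b => (1 / (T : ℝ)) * ∑ t, y t b) :
    (sSup {v : ℝ | ∃ x' : X → ℝ, IsMixed x' ∧ v = u x' ybar} -
        sInf {v : ℝ | ∃ y' : Y → ℝ, IsMixed y' ∧ v = u xbar y'} ≤ ε₁ + ε₂) ∧
    (∀ x' : X → ℝ, IsMixed x' → u xbar ybar ≥ u x' ybar - (ε₁ + ε₂)) ∧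
    (∀ y' : Y → ℝ, IsMixed y' → u xbar ybar ≤ u xbar y' + (ε₁ + ε₂)) := by
  have hT0 : (0:ℝ) < T := by exact_mod_cast Nat.lt_of_lt_of_le Nat.zero_lt_one hT
  have hT0' : (T:ℝ) ≠ 0 := ne_of_gt hT0
  set M := (Finset.univ ×ˢ Finset.univ).sup' (by simp) (fun p : X × Y => G p.1 p.2) with hM
  set m := (Finset.univ ×ˢ Finset.univ).inf' (by simp) (fun p : X × Y => G p.1 p.2) with hm
  have hub : ∀ x' y', IsMixed x' → IsMixed y' → u x' y' ≤ M := fun x' y' h1 h2 => by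
    rw [hu]; exact aux_ub G x' y' h1 h2
  have hlb : ∀ x' y', IsMixed x' → IsMixed y' → m ≤ u x' y' := fun x' y' h1 h2 => by
    rw [hu]; exact aux_lb G x' y' h1 h2
  -- xbar and ybar are mixed
  have hxbarM : IsMixed xbar := by
    subst hxbar
    constructor
    · intro a
      exact mul_nonneg (by positivity) (Finset.sum_nonneg fun t _ => (hx t).1 a)
    · rw [← Finset.mul_sum, Finset.sum_comm]
      have : ∀ t : Fin T, ∑ a, x t a = 1 := fun t => (hx t).2
      simp only [this, Finset.sum_const, Finset.card_univ, Fintype.card_fin,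
        nsmul_eq_mul, mul_one]
      field_simp
  have hybarM : IsMixed ybar := by
    subst hybar
    constructor
    · intro b
      exact mul_nonneg (by positivity) (Finset.sum_nonneg fun t _ => (hy t).1 b)
    · rw [← Finset.mul_sum, Finset.sum_comm]
      have : ∀ t : Fin T, ∑ b, y t b = 1 := fun t => (hy t).2
      simp only [this, Finset.sum_const, Finset.card_univ, Fintype.card_fin,
        nsmul_eq_mul, mul_one]
      field_simp
  -- bilinearity: averaging
  have key1 : ∀ x' : X → ℝ, u x' ybar = (1/(T:ℝ)) * ∑ t, u x' (y t) := by
    intro x'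
    rw [hu, hybar]
    simp only [hu]
    exact aux_left G T x' y
  have key2 : ∀ y' : Y → ℝ, u xbar y' = (1/(T:ℝ)) * ∑ t, u (x t) y' := by
    intro y'
    rw [hu, hxbar]
    simp only [hu]
    exact aux_right G T y' x
  set S := ∑ t, u (x t) (y t) with hS
  set S1 := {v : ℝ | ∃ x' : X → ℝ, IsMixed x' ∧ v = u x' ybar} with hS1
  set S2 := {v : ℝ | ∃ y' : Y → ℝ, IsMixed y' ∧ v = u xbar y'} with hS2
  set A := {v : ℝ | ∃ x' : X → ℝ, IsMixed x' ∧ v = ∑ t, u x' (y t)} with hA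
  set B := {v : ℝ | ∃ y' : Y → ℝ, IsMixed y' ∧ v = ∑ t, u (x t) y'} with hB
  have hAbdd : BddAbove A := by
    refine ⟨(T:ℝ) * M, ?_⟩
    rintro v ⟨x', hx', rfl⟩
    calc ∑ t, u x' (y t) ≤ ∑ _t : Fin T, M :=
          Finset.sum_le_sum fun t _ => hub x' (y t) hx' (hy t)
      _ = (T:ℝ) * M := by simp [mul_comm]
  have hBbdd : BddBelow B := by
    refine ⟨(T:ℝ) * m, ?_⟩
    rintro v ⟨y', hy', rfl⟩
    calc (T:ℝ) * m = ∑ _t : Fin T, m := by simp [mul_comm]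
      _ ≤ ∑ t, u (x t) y' := Finset.sum_le_sum fun t _ => hlb (x t) y' (hx t) hy'
  have hS1bdd : BddAbove S1 := by
    refine ⟨M, ?_⟩
    rintro v ⟨x', hx', rfl⟩
    exact hub x' ybar hx' hybarM
  have hS2bdd : BddBelow S2 := by
    refine ⟨m, ?_⟩
    rintro v ⟨y', hy', rfl⟩
    exact hlb xbar y' hxbarM hy'
  -- regret bounds give sSup A ≤ S + T ε₁ and sInf B ≥ S - T ε₂
  have hregA : sSup A ≤ S + (T:ℝ) * ε₁ := by
    rw [one_div, inv_mul_le_iff₀ hT0] at hreg₁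
    linarith [hreg₁]
  have hregB : S - (T:ℝ) * ε₂ ≤ sInf B := by
    rw [one_div, inv_mul_le_iff₀ hT0] at hreg₂
    linarith [hreg₂]
  -- bound the sup of S1 and the inf of S2
  have hSupS1 : sSup S1 ≤ (1/(T:ℝ)) * S + ε₁ := by
    refine csSup_le ⟨u xbar ybar, xbar, hxbarM, rfl⟩ ?_
    rintro v ⟨x', hx', rfl⟩
    have h1 : ∑ t, u x' (y t) ≤ sSup A := le_csSup hAbdd ⟨x', hx', rfl⟩
    have h2 : u x' ybar ≤ (1/(T:ℝ)) * (S + (T:ℝ) * ε₁) := by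
      rw [key1]
      exact mul_le_mul_of_nonneg_left (le_trans h1 hregA) (by positivity)
    calc u x' ybar ≤ (1/(T:ℝ)) * (S + (T:ℝ) * ε₁) := h2
      _ = (1/(T:ℝ)) * S + ε₁ := by field_simp
  have hInfS2 : (1/(T:ℝ)) * S - ε₂ ≤ sInf S2 := by
    refine le_csInf ⟨u xbar ybar, ybar, hybarM, rfl⟩ ?_
    rintro v ⟨y', hy', rfl⟩
    have h1 : sInf B ≤ ∑ t, u (x t) y' := csInf_le hBbdd ⟨y', hy', rfl⟩
    have h2 : (1/(T:ℝ)) * (S - (T:ℝ) * ε₂) ≤ u xbar y' := by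
      rw [key2]
      exact mul_le_mul_of_nonneg_left (le_trans hregB h1) (by positivity)
    calc (1/(T:ℝ)) * S - ε₂ = (1/(T:ℝ)) * (S - (T:ℝ) * ε₂) := by field_simp
      _ ≤ u xbar y' := h2
  have hmem1 : u xbar ybar ≤ sSup S1 := le_csSup hS1bdd ⟨xbar, hxbarM, rfl⟩
  have hmem2 : sInf S2 ≤ u xbar ybar := csInf_le hS2bdd ⟨ybar, hybarM, rfl⟩
  refine ⟨by linarith, ?_, ?_⟩
  · intro x' hx'
    have : u x' ybar ≤ sSup S1 := le_csSup hS1bdd ⟨x', hx', rfl⟩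
    linarith
  · intro y' hy'
    have : sInf S2 ≤ u xbar y' := csInf_le hS2bdd ⟨y', hy', rfl⟩
    linarith
end

section
/- Consider the adversarial multi-armed bandit with K ≥ 2 arms and horizon T ≥ 1, where the adversary fixes in advance reward vectors r_1, …, r_T : Fin K → [0,1]. The EXP3 algorithm maintains weights w_1(i) = 1 for all arms i, at each round t samples an arm a_t from the distribution p_t(i) = w_t(i)/Σ_j w_t(j), observes only r_t(a_t), forms the importance-weighted estimates r̂_t(i) = 1 − [𝟙{a_t = i}/p_t(i)](1 − r_t(a_t)), and updates w_{t+1}(i) = w_t(i) · exp(η r̂_t(i)) with learning rate η = √(2 log K / (K T)). Then its expected regret satisfies max_{i} Σ_{t=1}^T r_t(i) − E[Σ_{t=1}^T r_t(a_t)] ≤ √(2 T K log K), where the expectation is over the algorithm's random arm draws. -/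
/-- The EXP3 weights after `t` rounds, given learning rate `η`, reward vectors
`r`, and a realized sequence `a` of sampled arms. The weights start at 1, and
after round `t` (with sampled arm `a t`) the weight of arm `i` is multiplied by
`exp (η * r̂_t i)`, where `r̂_t i = 1 − 𝟙{a t = i}/p_t(i) · (1 − r_t (a t))` is
the importance-weighted reward estimate and `p_t` is the distribution
proportional to the current weights. The weights after `t` rounds only depend
on the arms sampled in rounds before `t`. -/
noncomputable def exp3Weights (K T : ℕ) (η : ℝ) (r : Fin T → Fin K → ℝ)
    (a : Fin T → Fin K) : ℕ → Fin K → ℝ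
  | 0 => fun _ => 1
  | (t + 1) => fun i =>
      if ht : t < T then
        let wt := exp3Weights K T η r a t
        let pt : Fin K → ℝ := fun j => wt j / ∑ l, wt l
        let at' : Fin K := a ⟨t, ht⟩
        let rhat : Fin K → ℝ := fun j =>
          1 - (if at' = j then (1 : ℝ) else 0) / pt j * (1 - r ⟨t, ht⟩ at')
        wt i * Real.exp (η * rhat i)
      else exp3Weights K T η r a t i

namespace Exp3Aux

variable (K T : ℕ) (η : ℝ) (r : Fin T → Fin K → ℝ)

/-- The sampling distribution at step `n`. -/
noncomputable def q (a : Fin T → Fin K) (n : ℕ) (i : Fin K) : ℝ :=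
  exp3Weights K T η r a n i / ∑ j, exp3Weights K T η r a n j

/-- Importance-weighted loss estimate at step `n` (`0` for out-of-range `n`). -/
noncomputable def lh (a : Fin T → Fin K) (n : ℕ) (i : Fin K) : ℝ :=
  if hn : n < T then
    (if a ⟨n, hn⟩ = i then (1 : ℝ) else 0) / q K T η r a n i * (1 - r ⟨n, hn⟩ (a ⟨n, hn⟩))
  else 0

lemma w_succ (a : Fin T → Fin K) {n : ℕ} (hn : n < T) (i : Fin K) :
    exp3Weights K T η r a (n + 1) i =
      exp3Weights K T η r a n i * Real.exp (η * (1 - lh K T η r a n i)) := by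
  show (if ht : n < T then _ else _) = _
  rw [dif_pos hn, lh, dif_pos hn]
  rfl

lemma w_pos (a : Fin T → Fin K) : ∀ n i, 0 < exp3Weights K T η r a n i
  | 0, i => one_pos
  | (n + 1), i => by
      rw [exp3Weights]
      split_ifs with ht
      · exact mul_pos (w_pos a n i) (Real.exp_pos _)
      · exact w_pos a n i


lemma w_succ_of_ge (a : Fin T → Fin K) {n : ℕ} (hn : ¬ n < T) (i : Fin K) :
    exp3Weights K T η r a (n + 1) i = exp3Weights K T η r a n i := by
  show (if ht : n < T then _ else _) = _
  rw [dif_neg hn]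

lemma Wsum_pos (hK : 0 < K) (a : Fin T → Fin K) (n : ℕ) :
    0 < ∑ j, exp3Weights K T η r a n j := by
  have : Nonempty (Fin K) := ⟨⟨0, hK⟩⟩
  exact Finset.sum_pos (fun j _ => w_pos K T η r a n j) Finset.univ_nonempty

lemma q_pos (hK : 0 < K) (a : Fin T → Fin K) (n : ℕ) (i : Fin K) :
    0 < q K T η r a n i :=
  div_pos (w_pos K T η r a n i) (Wsum_pos K T η r hK a n)

lemma q_sum (hK : 0 < K) (a : Fin T → Fin K) (n : ℕ) :
    ∑ i, q K T η r a n i = 1 := by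
  unfold q
  rw [← Finset.sum_div]
  exact div_self (ne_of_gt (Wsum_pos K T η r hK a n))

lemma w_local : ∀ (n : ℕ) (a b : Fin T → Fin K),
    (∀ s : Fin T, (s : ℕ) < n → a s = b s) →
    ∀ i, exp3Weights K T η r a n i = exp3Weights K T η r b n i
  | 0, a, b, h, i => rfl
  | (n + 1), a, b, h, i => by
      have hw : ∀ j, exp3Weights K T η r a n j = exp3Weights K T η r b n j :=
        w_local n a b (fun s hs => h s (Nat.lt_succ_of_lt hs))
      by_cases ht : n < T
      · have hab : a ⟨n, ht⟩ = b ⟨n, ht⟩ := h ⟨n, ht⟩ (Nat.lt_succ_self n)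
        have hq : q K T η r a n i = q K T η r b n i := by
          unfold q; rw [hw i]
          congr 1
          exact Finset.sum_congr rfl (fun j _ => hw j)
        have hlh : lh K T η r a n i = lh K T η r b n i := by
          unfold lh; rw [dif_pos ht, dif_pos ht, hab, hq]
        rw [w_succ K T η r a ht i, w_succ K T η r b ht i, hw i, hlh]
      · rw [w_succ_of_ge K T η r a ht i, w_succ_of_ge K T η r b ht i, hw i]

lemma q_local (n : ℕ) (a b : Fin T → Fin K)
    (h : ∀ s : Fin T, (s : ℕ) < n → a s = b s) (i : Fin K) :
    q K T η r a n i = q K T η r b n i := by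
  unfold q
  rw [w_local K T η r n a b h i]
  congr 1
  exact Finset.sum_congr rfl (fun j _ => w_local K T η r n a b h j)

lemma lh_local (n : ℕ) (a b : Fin T → Fin K)
    (h : ∀ s : Fin T, (s : ℕ) ≤ n → a s = b s) (i : Fin K) :
    lh K T η r a n i = lh K T η r b n i := by
  unfold lh
  by_cases hn : n < T
  · rw [dif_pos hn, dif_pos hn, h ⟨n, hn⟩ le_rfl,
      q_local K T η r n a b (fun s hs => h s (le_of_lt hs)) i]
  · rw [dif_neg hn, dif_neg hn]

lemma lh_nonneg (hK : 0 < K) (hr : ∀ t i, r t i ∈ Set.Icc (0 : ℝ) 1)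
    (a : Fin T → Fin K) (n : ℕ) (i : Fin K) : 0 ≤ lh K T η r a n i := by
  unfold lh
  by_cases hn : n < T
  · rw [dif_pos hn]
    apply mul_nonneg
    · apply div_nonneg _ (le_of_lt (q_pos K T η r hK a n i))
      split_ifs <;> norm_num
    · have := (hr ⟨n, hn⟩ (a ⟨n, hn⟩)).2
      linarith
  · rw [dif_neg hn]

lemma sumA (hK : 0 < K) (a : Fin T → Fin K) {n : ℕ} (hn : n < T) :
    ∑ j, q K T η r a n j * lh K T η r a n j = 1 - r ⟨n, hn⟩ (a ⟨n, hn⟩) := by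
  have hterm : ∀ j, q K T η r a n j * lh K T η r a n j =
      (if a ⟨n, hn⟩ = j then (1 : ℝ) else 0) * (1 - r ⟨n, hn⟩ (a ⟨n, hn⟩)) := by
    intro j
    rw [lh, dif_pos hn]
    have hq := ne_of_gt (q_pos K T η r hK a n j)
    field_simp
  simp only [hterm, ite_mul, one_mul, zero_mul]
  simp [Finset.sum_ite_eq]

lemma sumB (hK : 0 < K) (a : Fin T → Fin K) {n : ℕ} (hn : n < T) :
    ∑ j, q K T η r a n j * (lh K T η r a n j) ^ 2 =
      (1 - r ⟨n, hn⟩ (a ⟨n, hn⟩)) ^ 2 / q K T η r a n (a ⟨n, hn⟩) := by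
  rw [Finset.sum_eq_single (a ⟨n, hn⟩)]
  · rw [lh, dif_pos hn, if_pos rfl]
    have hq := ne_of_gt (q_pos K T η r hK a n (a ⟨n, hn⟩))
    field_simp
  · intro j _ hj
    rw [lh, dif_pos hn, if_neg (Ne.symm hj)]
    simp
  · intro h
    exact absurd (Finset.mem_univ _) h

lemma exp_neg_le_quadratic {x : ℝ} (hx : 0 ≤ x) :
    Real.exp (-x) ≤ 1 - x + x ^ 2 / 2 := by
  have key : ∀ y : ℝ, HasDerivAt (fun y : ℝ => 1 - y + y ^ 2 / 2 - Real.exp (-y))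
      (-1 + y + Real.exp (-y)) y := by
    intro y
    have h1 : HasDerivAt (fun y : ℝ => 1 - y) (-1) y := by
      simpa using (hasDerivAt_id y).const_sub 1
    have h2 : HasDerivAt (fun y : ℝ => y ^ 2 / 2) y y := by
      have := (hasDerivAt_pow 2 y).div_const 2
      norm_num at this
      simpa using this
    have h3 : HasDerivAt (fun y : ℝ => Real.exp (-y)) (-Real.exp (-y)) y := by
      simpa using ((hasDerivAt_id y).neg).exp
    have h := (h1.add h2).sub h3
    exact h.congr_deriv (by ring)
  have mono : MonotoneOn (fun y : ℝ => 1 - y + y ^ 2 / 2 - Real.exp (-y)) (Set.Ici 0) := by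
    apply monotoneOn_of_deriv_nonneg (convex_Ici 0)
    · exact Continuous.continuousOn (by continuity)
    · intro y _
      exact (key y).differentiableAt.differentiableWithinAt
    · intro y _
      rw [(key y).deriv]
      have h4 := Real.add_one_le_exp (-y)
      linarith
  have h0 := mono Set.self_mem_Ici hx hx
  simp only [Real.exp_zero] at h0
  norm_num at h0
  linarith

lemma w_formula (a : Fin T → Fin K) (i : Fin K) :
    ∀ n, n ≤ T → exp3Weights K T η r a n i =
      Real.exp (η * ∑ t ∈ Finset.range n, (1 - lh K T η r a t i)) := by
  intro n
  induction n with
  | zero => intro _; simp [exp3Weights]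
  | succ n ih =>
    intro hn1
    have hn : n < T := hn1
    rw [w_succ K T η r a hn i, ih (le_of_lt hn), Finset.sum_range_succ, ← Real.exp_add]
    congr 1
    ring

/-- The per-round exponential drift term. -/
noncomputable def cterm (a : Fin T → Fin K) (n : ℕ) : ℝ :=
  η - η * (∑ j, q K T η r a n j * lh K T η r a n j)
    + η ^ 2 / 2 * (∑ j, q K T η r a n j * (lh K T η r a n j) ^ 2)

lemma W_le (hK : 0 < K) (hηp : 0 ≤ η) (hr : ∀ t i, r t i ∈ Set.Icc (0 : ℝ) 1)
    (a : Fin T → Fin K) :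
    ∀ n, n ≤ T → ∑ j, exp3Weights K T η r a n j ≤
      (K : ℝ) * Real.exp (∑ t ∈ Finset.range n, cterm K T η r a t) := by
  intro n
  induction n with
  | zero => simp [exp3Weights]
  | succ n ih =>
    intro hn1
    have hn : n < T := hn1
    have hW := Wsum_pos K T η r hK a n
    set Wn := ∑ j, exp3Weights K T η r a n j with hWn
    have hstep : ∑ j, exp3Weights K T η r a (n + 1) j ≤ Wn * Real.exp (cterm K T η r a n) := by
      have h1 : ∑ j, exp3Weights K T η r a (n + 1) j =
          Wn * ∑ j, q K T η r a n j * Real.exp (η * (1 - lh K T η r a n j)) := by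
        rw [Finset.mul_sum]
        refine Finset.sum_congr rfl (fun j _ => ?_)
        rw [w_succ K T η r a hn j]
        show exp3Weights K T η r a n j * Real.exp (η * (1 - lh K T η r a n j)) = (∑ j, exp3Weights K T η r a n j) * _
        unfold q
        field_simp
        exact (mul_div_cancel_right₀ _ (ne_of_gt hW)).symm
      rw [h1]
      have h2 : ∑ j, q K T η r a n j * Real.exp (η * (1 - lh K T η r a n j)) ≤
          Real.exp (cterm K T η r a n) := by
        have h3 : ∑ j, q K T η r a n j * Real.exp (η * (1 - lh K T η r a n j)) ≤
            ∑ j, q K T η r a n j *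
              (Real.exp η * (1 - η * lh K T η r a n j + (η * lh K T η r a n j) ^ 2 / 2)) := by
          refine Finset.sum_le_sum (fun j _ => ?_)
          refine mul_le_mul_of_nonneg_left ?_ (le_of_lt (q_pos K T η r hK a n j))
          have hxx : 0 ≤ η * lh K T η r a n j :=
            mul_nonneg hηp (lh_nonneg K T η r hK hr a n j)
          have := exp_neg_le_quadratic hxx
          calc Real.exp (η * (1 - lh K T η r a n j))
              = Real.exp η * Real.exp (-(η * lh K T η r a n j)) := by
                rw [← Real.exp_add]; congr 1; ring
            _ ≤ Real.exp η * (1 - η * lh K T η r a n j + (η * lh K T η r a n j) ^ 2 / 2) :=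
                mul_le_mul_of_nonneg_left this (le_of_lt (Real.exp_pos η))
        have h4 : ∑ j, q K T η r a n j *
            (Real.exp η * (1 - η * lh K T η r a n j + (η * lh K T η r a n j) ^ 2 / 2)) =
            Real.exp η * (1 - η * (∑ j, q K T η r a n j * lh K T η r a n j)
              + η ^ 2 / 2 * (∑ j, q K T η r a n j * (lh K T η r a n j) ^ 2)) := by
          have expand : ∀ j, q K T η r a n j *
              (Real.exp η * (1 - η * lh K T η r a n j + (η * lh K T η r a n j) ^ 2 / 2)) =
              Real.exp η * q K T η r a n j
                - Real.exp η * η * (q K T η r a n j * lh K T η r a n j)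
                + Real.exp η * (η ^ 2 / 2) * (q K T η r a n j * (lh K T η r a n j) ^ 2) := by
            intro j; ring
          rw [Finset.sum_congr rfl (fun j _ => expand j), Finset.sum_add_distrib,
            Finset.sum_sub_distrib, ← Finset.mul_sum, ← Finset.mul_sum, ← Finset.mul_sum,
            q_sum K T η r hK a n]
          ring
        have h5 : Real.exp η * (1 - η * (∑ j, q K T η r a n j * lh K T η r a n j)
              + η ^ 2 / 2 * (∑ j, q K T η r a n j * (lh K T η r a n j) ^ 2)) ≤
            Real.exp (cterm K T η r a n) := by
          have hle := Real.add_one_le_exp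
            (-(η * (∑ j, q K T η r a n j * lh K T η r a n j))
              + η ^ 2 / 2 * (∑ j, q K T η r a n j * (lh K T η r a n j) ^ 2))
          calc Real.exp η * (1 - η * (∑ j, q K T η r a n j * lh K T η r a n j)
                + η ^ 2 / 2 * (∑ j, q K T η r a n j * (lh K T η r a n j) ^ 2))
              ≤ Real.exp η * Real.exp
                (-(η * (∑ j, q K T η r a n j * lh K T η r a n j))
                  + η ^ 2 / 2 * (∑ j, q K T η r a n j * (lh K T η r a n j) ^ 2)) := by
                refine mul_le_mul_of_nonneg_left ?_ (le_of_lt (Real.exp_pos η))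
                linarith
            _ = Real.exp (cterm K T η r a n) := by
                rw [← Real.exp_add, cterm]
                congr 1
                ring
        calc _ ≤ _ := h3
          _ = _ := h4
          _ ≤ _ := h5
      calc Wn * ∑ j, q K T η r a n j * Real.exp (η * (1 - lh K T η r a n j))
          ≤ Wn * Real.exp (cterm K T η r a n) :=
            mul_le_mul_of_nonneg_left h2 (le_of_lt hW)
        _ = _ := rfl
    calc ∑ j, exp3Weights K T η r a (n + 1) j ≤ Wn * Real.exp (cterm K T η r a n) := hstep
      _ ≤ ((K : ℝ) * Real.exp (∑ t ∈ Finset.range n, cterm K T η r a t)) *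
            Real.exp (cterm K T η r a n) :=
          mul_le_mul_of_nonneg_right (ih (le_of_lt hn)) (le_of_lt (Real.exp_pos _))
      _ = (K : ℝ) * Real.exp (∑ t ∈ Finset.range (n + 1), cterm K T η r a t) := by
          rw [Finset.sum_range_succ, Real.exp_add, mul_assoc]

/-- The pointwise (per-realization) EXP3 inequality. -/
lemma pointwise (hK : 0 < K) (hηp : 0 < η) (hr : ∀ t i, r t i ∈ Set.Icc (0 : ℝ) 1)
    (a : Fin T → Fin K) (i : Fin K) :
    (∑ t ∈ Finset.range T, ∑ j, q K T η r a t j * lh K T η r a t j)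
        - ∑ t ∈ Finset.range T, lh K T η r a t i ≤
      Real.log K / η
        + η / 2 * ∑ t ∈ Finset.range T, ∑ j, q K T η r a t j * (lh K T η r a t j) ^ 2 := by
  set A := ∑ t ∈ Finset.range T, ∑ j, q K T η r a t j * lh K T η r a t j with hA
  set B := ∑ t ∈ Finset.range T, ∑ j, q K T η r a t j * (lh K T η r a t j) ^ 2 with hB
  set L := ∑ t ∈ Finset.range T, lh K T η r a t i with hL
  have h1 : Real.exp (η * ∑ t ∈ Finset.range T, (1 - lh K T η r a t i)) ≤
      (K : ℝ) * Real.exp (∑ t ∈ Finset.range T, cterm K T η r a t) := by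
    rw [← w_formula K T η r a i T le_rfl]
    calc exp3Weights K T η r a T i ≤ ∑ j, exp3Weights K T η r a T j :=
          Finset.single_le_sum (fun j _ => le_of_lt (w_pos K T η r a T j)) (Finset.mem_univ i)
      _ ≤ _ := W_le K T η r hK (le_of_lt hηp) hr a T le_rfl
  have hKpos : (0 : ℝ) < (K : ℝ) := by exact_mod_cast hK
  have h2 : η * ∑ t ∈ Finset.range T, (1 - lh K T η r a t i) ≤
      Real.log K + ∑ t ∈ Finset.range T, cterm K T η r a t := by
    have := Real.log_le_log (Real.exp_pos _) h1
    rwa [Real.log_exp, Real.log_mul (ne_of_gt hKpos) (ne_of_gt (Real.exp_pos _)),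
      Real.log_exp] at this
  have h3 : ∑ t ∈ Finset.range T, (1 - lh K T η r a t i) = (T : ℝ) - L := by
    rw [Finset.sum_sub_distrib, Finset.sum_const, Finset.card_range, nsmul_eq_mul, mul_one]
  have h4 : ∑ t ∈ Finset.range T, cterm K T η r a t = η * T - η * A + η ^ 2 / 2 * B := by
    unfold cterm
    rw [Finset.sum_add_distrib, Finset.sum_sub_distrib, Finset.sum_const, Finset.card_range,
      ← Finset.mul_sum, ← Finset.mul_sum, nsmul_eq_mul]
    ring
  rw [h3, h4] at h2
  have h5 : (A - L) * η ≤ Real.log K + η ^ 2 / 2 * B := by nlinarith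
  have h6 : A - L ≤ (Real.log K + η ^ 2 / 2 * B) / η := (le_div_iff₀ hηp).mpr h5
  calc A - L ≤ (Real.log K + η ^ 2 / 2 * B) / η := h6
    _ = Real.log K / η + η / 2 * B := by field_simp

/-- Partial product of sampling probabilities over rounds `< m`. -/
noncomputable def PP (a : Fin T → Fin K) (m : ℕ) : ℝ :=
  ∏ t : Fin T, if (t : ℕ) < m then q K T η r a t (a t) else 1

lemma PP_nonneg (hK : 0 < K) (a : Fin T → Fin K) (m : ℕ) : 0 ≤ PP K T η r a m := by
  refine Finset.prod_nonneg (fun t _ => ?_)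
  split_ifs
  · exact le_of_lt (q_pos K T η r hK a t (a t))
  · norm_num

lemma PP_zero (a : Fin T → Fin K) : PP K T η r a 0 = 1 := by
  unfold PP; simp

lemma PP_succ (a : Fin T → Fin K) {m : ℕ} (hm : m < T) :
    PP K T η r a (m + 1) = PP K T η r a m * q K T η r a m (a ⟨m, hm⟩) := by
  unfold PP
  rw [← Finset.mul_prod_erase Finset.univ _ (Finset.mem_univ (⟨m, hm⟩ : Fin T)),
    ← Finset.mul_prod_erase Finset.univ
      (fun t : Fin T => if (t : ℕ) < m then q K T η r a t (a t) else 1)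
      (Finset.mem_univ (⟨m, hm⟩ : Fin T))]
  have h1 : (if ((⟨m, hm⟩ : Fin T) : ℕ) < m + 1 then q K T η r a (⟨m, hm⟩ : Fin T) (a ⟨m, hm⟩) else 1)
      = q K T η r a m (a ⟨m, hm⟩) := by simp
  have h2 : (if ((⟨m, hm⟩ : Fin T) : ℕ) < m then q K T η r a (⟨m, hm⟩ : Fin T) (a ⟨m, hm⟩) else 1)
      = 1 := by simp
  rw [h1, h2, one_mul]
  rw [Finset.prod_congr rfl (fun t ht => ?_)]
  · ring
  · have htm : (t : ℕ) ≠ m := by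
      intro hc
      exact (Finset.mem_erase.mp ht).1 (Fin.ext hc)
    have : (t : ℕ) < m + 1 ↔ (t : ℕ) < m := by omega
    simp only [this]

lemma PP_local (m : ℕ) (a b : Fin T → Fin K)
    (h : ∀ s : Fin T, (s : ℕ) < m → a s = b s) :
    PP K T η r a m = PP K T η r b m := by
  unfold PP
  refine Finset.prod_congr rfl (fun t _ => ?_)
  by_cases ht : (t : ℕ) < m
  · rw [if_pos ht, if_pos ht, h t ht,
      q_local K T η r t a b (fun s hs => h s (lt_trans hs ht)) (b t)]
  · rw [if_neg ht, if_neg ht]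

lemma key_update (t : Fin T) (H : (Fin T → Fin K) → ℝ) :
    ∑ j : Fin K, ∑ a : Fin T → Fin K, H (Function.update a t j)
      = (K : ℝ) * ∑ a : Fin T → Fin K, H a := by
  classical
  set e := Equiv.funSplitAt t (Fin K) with he
  have hupd : ∀ (a : Fin T → Fin K) (j : Fin K),
      Function.update a t j = e.symm (j, fun s => a s) := by
    intro a j
    funext x
    by_cases hx : x = t
    · subst hx
      simp [he, Equiv.funSplitAt, Equiv.piSplitAt, Function.update]
    · simp [he, Equiv.funSplitAt, Equiv.piSplitAt, Function.update, hx]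
  have h1 : ∀ j : Fin K, ∑ a : Fin T → Fin K, H (Function.update a t j)
      = (K : ℝ) * ∑ g : { s : Fin T // s ≠ t } → Fin K, H (e.symm (j, g)) := by
    intro j
    have := Equiv.sum_comp e (fun z : Fin K × ({ s : Fin T // s ≠ t } → Fin K) =>
      H (e.symm (j, z.2)))
    rw [show (∑ a : Fin T → Fin K, H (Function.update a t j)) =
        ∑ a : Fin T → Fin K, H (e.symm (j, (e a).2)) from
      Finset.sum_congr rfl (fun a _ => by rw [hupd a j]; rfl)]
    rw [this, Fintype.sum_prod_type]
    simp [Finset.sum_const, Finset.card_univ, mul_comm]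
  rw [Finset.sum_congr rfl (fun j _ => h1 j), ← Finset.mul_sum]
  congr 1
  rw [← Equiv.sum_comp e.symm H, Fintype.sum_prod_type]

lemma step' (hK : 0 < K) {m : ℕ} (hm : m < T) (F : (Fin T → Fin K) → ℝ) :
    (K : ℝ) * ∑ a : Fin T → Fin K, PP K T η r a (m + 1) * F a =
      ∑ a : Fin T → Fin K, PP K T η r a m *
        (∑ j, q K T η r a m j * F (Function.update a ⟨m, hm⟩ j)) := by
  rw [← key_update K T ⟨m, hm⟩ (fun a => PP K T η r a (m + 1) * F a)]
  rw [Finset.sum_comm]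
  refine Finset.sum_congr rfl (fun a _ => ?_)
  rw [Finset.mul_sum]
  refine Finset.sum_congr rfl (fun j _ => ?_)
  have hagree : ∀ s : Fin T, (s : ℕ) < m → Function.update a ⟨m, hm⟩ j s = a s := by
    intro s hs
    apply Function.update_of_ne
    intro hc
    rw [hc] at hs
    simp at hs
  have hPP : PP K T η r (Function.update a ⟨m, hm⟩ j) (m + 1)
      = PP K T η r a m * q K T η r a m j := by
    rw [PP_succ K T η r _ hm, PP_local K T η r m _ a hagree,
      q_local K T η r m _ a hagree, Function.update_self]
  rw [hPP]
  ring

lemma tower (hK : 0 < K) : ∀ (d m : ℕ), m + d = T → ∀ F : (Fin T → Fin K) → ℝ,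
    (∀ a b : Fin T → Fin K, (∀ s : Fin T, (s : ℕ) < m → a s = b s) → F a = F b) →
    ∑ a : Fin T → Fin K, PP K T η r a T * F a
      = (∑ a : Fin T → Fin K, PP K T η r a m * F a) / (K : ℝ) ^ d := by
  intro d
  induction d with
  | zero =>
    intro m hm F _
    subst hm
    simp
  | succ d ih =>
    intro m hm F hF
    have hmT : m < T := by omega
    have h1 := ih (m + 1) (by omega) F
      (fun a b h => hF a b (fun s hs => h s (Nat.lt_succ_of_lt hs)))
    have h2 : (K : ℝ) * ∑ a : Fin T → Fin K, PP K T η r a (m + 1) * F a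
        = ∑ a : Fin T → Fin K, PP K T η r a m * F a := by
      rw [step' K T η r hK hmT F]
      refine Finset.sum_congr rfl (fun a _ => ?_)
      have hFa : ∀ j, F (Function.update a ⟨m, hmT⟩ j) = F a := by
        intro j
        refine hF _ _ (fun s hs => ?_)
        apply Function.update_of_ne
        intro hc
        rw [hc] at hs
        simp at hs
      congr 1
      rw [Finset.sum_congr rfl (fun j _ => by rw [hFa j]), ← Finset.sum_mul,
        q_sum K T η r hK a m, one_mul]
    have hKne : (K : ℝ) ≠ 0 := by positivity
    rw [h1, ← h2]
    rw [pow_succ]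
    field_simp

lemma E_one (hK : 0 < K) : ∑ a : Fin T → Fin K, PP K T η r a T = 1 := by
  have h := tower K T η r hK T 0 (by omega) (fun _ => 1) (fun _ _ _ => rfl)
  simp only [mul_one] at h
  rw [h]
  have hcard : (Finset.univ : Finset (Fin T → Fin K)).card = K ^ T := by
    rw [Finset.card_univ]
    simp [Fintype.card_fun]
  rw [Finset.sum_congr rfl (fun a _ => PP_zero K T η r a), Finset.sum_const, hcard]
  have hKne : (K : ℝ) ≠ 0 := by positivity
  simp
  intro h0; omega

lemma PP_m_sum (hK : 0 < K) (m : ℕ) (hm : m ≤ T) :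
    ∑ a : Fin T → Fin K, PP K T η r a m = (K : ℝ) ^ (T - m) := by
  have h := tower K T η r hK (T - m) m (by omega) (fun _ => 1) (fun _ _ _ => rfl)
  simp only [mul_one] at h
  rw [E_one K T η r hK] at h
  have hKd : ((K : ℝ) ^ (T - m)) ≠ 0 := by positivity
  field_simp at h
  linarith [h]

lemma expect (hK : 0 < K) (t : Fin T) (G : (Fin T → Fin K) → ℝ)
    (hG : ∀ a b : Fin T → Fin K, (∀ s : Fin T, (s : ℕ) ≤ (t : ℕ) → a s = b s) → G a = G b)
    (c : ℝ)
    (hc : ∀ a : Fin T → Fin K, ∑ j, q K T η r a (t : ℕ) j * G (Function.update a t j) = c) :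
    ∑ a : Fin T → Fin K, PP K T η r a T * G a = c := by
  have hKne : (K : ℝ) ≠ 0 := by positivity
  set d := T - ((t : ℕ) + 1) with hd
  have h1 := tower K T η r hK d ((t : ℕ) + 1) (by omega) G
    (fun a b h => hG a b (fun s hs => h s (by omega)))
  have h2 := step' K T η r hK t.isLt G
  have heta : (⟨(t : ℕ), t.isLt⟩ : Fin T) = t := Fin.eta t t.isLt
  rw [heta] at h2
  simp only [hc] at h2
  have h3 : ∑ a : Fin T → Fin K, PP K T η r a (t : ℕ) * c = c * (K : ℝ) ^ (T - (t : ℕ)) := by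
    rw [← Finset.sum_mul, PP_m_sum K T η r hK (t : ℕ) (le_of_lt t.isLt)]
    ring
  rw [h3] at h2
  have hTt : T - (t : ℕ) = d + 1 := by omega
  rw [hTt] at h2
  have h4 : ∑ a : Fin T → Fin K, PP K T η r a ((t : ℕ) + 1) * G a = c * (K : ℝ) ^ d := by
    apply mul_left_cancel₀ hKne
    rw [h2, pow_succ]
    ring
  rw [h1, h4]
  have hKd : ((K : ℝ) ^ d) ≠ 0 := by positivity
  field_simp

lemma E_lh (hK : 0 < K) (t : Fin T) (i : Fin K) :
    ∑ a : Fin T → Fin K, PP K T η r a T * lh K T η r a (t : ℕ) i = 1 - r t i := by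
  refine expect K T η r hK t _ (fun a b h => lh_local K T η r (t : ℕ) a b h i) _ (fun a => ?_)
  have hterm : ∀ j : Fin K, lh K T η r (Function.update a t j) (t : ℕ) i =
      (if j = i then (1 : ℝ) else 0) / q K T η r a (t : ℕ) i * (1 - r t j) := by
    intro j
    rw [lh, dif_pos t.isLt]
    have heta : (⟨(t : ℕ), t.isLt⟩ : Fin T) = t := Fin.eta t t.isLt
    rw [heta, Function.update_self,
      q_local K T η r (t : ℕ) (Function.update a t j) a
        (fun s hs => by
          apply Function.update_of_ne
          intro hst
          rw [hst] at hs
          exact lt_irrefl _ hs) i]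
  rw [Finset.sum_congr rfl (fun j _ => by rw [hterm j])]
  rw [Finset.sum_eq_single i]
  · rw [if_pos rfl]
    have hq := ne_of_gt (q_pos K T η r hK a (t : ℕ) i)
    field_simp
  · intro j _ hj
    rw [if_neg hj]
    simp
  · intro h
    exact absurd (Finset.mem_univ _) h

lemma E_B (hK : 0 < K) (t : Fin T) :
    ∑ a : Fin T → Fin K, PP K T η r a T *
        ((1 - r t (a t)) ^ 2 / q K T η r a (t : ℕ) (a t)) = ∑ j, (1 - r t j) ^ 2 := by
  refine expect K T η r hK t (fun a => (1 - r t (a t)) ^ 2 / q K T η r a (t : ℕ) (a t))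
    (fun a b h => ?_) _ (fun a => ?_)
  · rw [h t le_rfl, q_local K T η r (t : ℕ) a b (fun s hs => h s (le_of_lt hs))]
  · have hq2 : ∀ j : Fin K, q K T η r (Function.update a t j) (t : ℕ) j = q K T η r a (t : ℕ) j := by
      intro j
      exact q_local K T η r (t : ℕ) (Function.update a t j) a
        (fun s hs => by
          apply Function.update_of_ne
          intro hst
          rw [hst] at hs
          exact lt_irrefl _ hs) j
    refine Finset.sum_congr rfl (fun j _ => ?_)
    simp only [Function.update_self, hq2]
    have hq := ne_of_gt (q_pos K T η r hK a (t : ℕ) j)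
    field_simp
end Exp3Aux

open Exp3Aux

/-- **Expected regret bound for EXP3.**
In the adversarial bandit with K ≥ 2 arms, horizon T ≥ 1, rewards r_t(i) ∈ [0,1]
fixed in advance, and learning rate η = √(2 log K/(K T)), EXP3 — which at round
t samples arm a_t from p_t (proportional to the current weights) and updates the
weights with importance-weighted reward estimates — satisfies
max_i Σ_t r_t(i) − E[Σ_t r_t(a_t)] ≤ √(2 T K log K), the expectation being over
the product of the per-round sampling distributions along the realized arm
sequence. -/
theorem exp3_expected_regret (K T : ℕ) (hK : 2 ≤ K) (hT : 1 ≤ T)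
    (r : Fin T → Fin K → ℝ) (hr : ∀ t i, r t i ∈ Set.Icc (0 : ℝ) 1)
    (η : ℝ) (hη : η = Real.sqrt (2 * Real.log K / (K * T)))
    (p : (Fin T → Fin K) → Fin T → Fin K → ℝ)
    (hp : ∀ (a : Fin T → Fin K) (t : Fin T) (i : Fin K),
      p a t i = exp3Weights K T η r a (t : ℕ) i / ∑ j, exp3Weights K T η r a (t : ℕ) j)
    (P : (Fin T → Fin K) → ℝ)
    (hP : ∀ a : Fin T → Fin K, P a = ∏ t, p a t (a t)) :
    Finset.univ.sup' ⟨⟨0, by omega⟩, Finset.mem_univ _⟩ (fun i : Fin K => ∑ t, r t i) -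
        (∑ a : Fin T → Fin K, P a * ∑ t, r t (a t)) ≤
      Real.sqrt (2 * T * K * Real.log K) := by
  classical
  have hK0 : 0 < K := by omega
  have hT0 : 0 < T := hT
  have hKR : (0 : ℝ) < (K : ℝ) := by exact_mod_cast hK0
  have hTR : (0 : ℝ) < (T : ℝ) := by exact_mod_cast hT0
  have hL : 0 < Real.log K := Real.log_pos (by exact_mod_cast hK)
  have hηpos : 0 < η := by
    rw [hη]
    exact Real.sqrt_pos.mpr (div_pos (by linarith) (by positivity))
  -- identify the product distribution with `PP`
  have hPP : ∀ a : Fin T → Fin K, P a = PP K T η r a T := by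
    intro a
    rw [hP]
    unfold Exp3Aux.PP
    refine Finset.prod_congr rfl (fun t _ => ?_)
    rw [if_pos t.isLt, hp]
    rfl
  -- pointwise rewrites of the three sums in the pointwise inequality
  have hSA : ∀ a : Fin T → Fin K,
      ∑ t ∈ Finset.range T, ∑ j, q K T η r a t j * lh K T η r a t j
        = (T : ℝ) - ∑ t, r t (a t) := by
    intro a
    have h1 : ∀ t : Fin T, ∑ j, q K T η r a (t : ℕ) j * lh K T η r a (t : ℕ) j
        = 1 - r t (a t) := by
      intro t
      have h := sumA K T η r hK0 a t.isLt
      rwa [Fin.eta] at h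
    calc ∑ t ∈ Finset.range T, ∑ j, q K T η r a t j * lh K T η r a t j
        = ∑ t : Fin T, ∑ j, q K T η r a (t : ℕ) j * lh K T η r a (t : ℕ) j :=
          (Fin.sum_univ_eq_sum_range _ T).symm
      _ = ∑ t : Fin T, (1 - r t (a t)) := Finset.sum_congr rfl (fun t _ => h1 t)
      _ = (T : ℝ) - ∑ t, r t (a t) := by
          rw [Finset.sum_sub_distrib, Finset.sum_const, Finset.card_univ, Fintype.card_fin,
            nsmul_eq_mul, mul_one]
  have hSB : ∀ a : Fin T → Fin K,
      ∑ t ∈ Finset.range T, ∑ j, q K T η r a t j * (lh K T η r a t j) ^ 2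
        = ∑ t : Fin T, (1 - r t (a t)) ^ 2 / q K T η r a (t : ℕ) (a t) := by
    intro a
    have h1 : ∀ t : Fin T, ∑ j, q K T η r a (t : ℕ) j * (lh K T η r a (t : ℕ) j) ^ 2
        = (1 - r t (a t)) ^ 2 / q K T η r a (t : ℕ) (a t) := by
      intro t
      have h := sumB K T η r hK0 a t.isLt
      rwa [Fin.eta] at h
    calc ∑ t ∈ Finset.range T, ∑ j, q K T η r a t j * (lh K T η r a t j) ^ 2
        = ∑ t : Fin T, ∑ j, q K T η r a (t : ℕ) j * (lh K T η r a (t : ℕ) j) ^ 2 :=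
          (Fin.sum_univ_eq_sum_range _ T).symm
      _ = _ := Finset.sum_congr rfl (fun t _ => h1 t)
  have hSL : ∀ (a : Fin T → Fin K) (i : Fin K),
      ∑ t ∈ Finset.range T, lh K T η r a t i = ∑ t : Fin T, lh K T η r a (t : ℕ) i :=
    fun a i => (Fin.sum_univ_eq_sum_range _ T).symm
  -- expectations
  have hE1 : ∑ a : Fin T → Fin K, PP K T η r a T = 1 := E_one K T η r hK0
  have hE2 : ∀ i : Fin K,
      ∑ a : Fin T → Fin K, PP K T η r a T * ∑ t : Fin T, lh K T η r a (t : ℕ) i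
        = (T : ℝ) - ∑ t, r t i := by
    intro i
    calc ∑ a : Fin T → Fin K, PP K T η r a T * ∑ t : Fin T, lh K T η r a (t : ℕ) i
        = ∑ a : Fin T → Fin K, ∑ t : Fin T, PP K T η r a T * lh K T η r a (t : ℕ) i := by
          refine Finset.sum_congr rfl (fun a _ => ?_)
          rw [Finset.mul_sum]
      _ = ∑ t : Fin T, ∑ a : Fin T → Fin K, PP K T η r a T * lh K T η r a (t : ℕ) i :=
          Finset.sum_comm
      _ = ∑ t : Fin T, (1 - r t i) := Finset.sum_congr rfl (fun t _ => E_lh K T η r hK0 t i)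
      _ = (T : ℝ) - ∑ t, r t i := by
          rw [Finset.sum_sub_distrib, Finset.sum_const, Finset.card_univ, Fintype.card_fin,
            nsmul_eq_mul, mul_one]
  have hE3 : ∑ a : Fin T → Fin K, PP K T η r a T *
        ∑ t : Fin T, (1 - r t (a t)) ^ 2 / q K T η r a (t : ℕ) (a t)
      = ∑ t : Fin T, ∑ j, (1 - r t j) ^ 2 := by
    calc ∑ a : Fin T → Fin K, PP K T η r a T *
          ∑ t : Fin T, (1 - r t (a t)) ^ 2 / q K T η r a (t : ℕ) (a t)
        = ∑ a : Fin T → Fin K, ∑ t : Fin T,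
            PP K T η r a T * ((1 - r t (a t)) ^ 2 / q K T η r a (t : ℕ) (a t)) := by
          refine Finset.sum_congr rfl (fun a _ => ?_)
          rw [Finset.mul_sum]
      _ = ∑ t : Fin T, ∑ a : Fin T → Fin K,
            PP K T η r a T * ((1 - r t (a t)) ^ 2 / q K T η r a (t : ℕ) (a t)) :=
          Finset.sum_comm
      _ = ∑ t : Fin T, ∑ j, (1 - r t j) ^ 2 :=
          Finset.sum_congr rfl (fun t _ => E_B K T η r hK0 t)
  -- main bound for each arm
  have hmain : ∀ i : Fin K, (∑ t, r t i) - (∑ a : Fin T → Fin K, P a * ∑ t, r t (a t))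
      ≤ Real.log K / η + η / 2 * ((T : ℝ) * K) := by
    intro i
    have hpt : ∀ a : Fin T → Fin K,
        ((T : ℝ) - ∑ t, r t (a t)) - ∑ t : Fin T, lh K T η r a (t : ℕ) i
          ≤ Real.log K / η
            + η / 2 * ∑ t : Fin T, (1 - r t (a t)) ^ 2 / q K T η r a (t : ℕ) (a t) := by
      intro a
      have h := pointwise K T η r hK0 hηpos hr a i
      rwa [hSA a, hSB a, hSL a i] at h
    have hsum : ∑ a : Fin T → Fin K, PP K T η r a T *
          (((T : ℝ) - ∑ t, r t (a t)) - ∑ t : Fin T, lh K T η r a (t : ℕ) i)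
        ≤ ∑ a : Fin T → Fin K, PP K T η r a T *
          (Real.log K / η
            + η / 2 * ∑ t : Fin T, (1 - r t (a t)) ^ 2 / q K T η r a (t : ℕ) (a t)) :=
      Finset.sum_le_sum (fun a _ =>
        mul_le_mul_of_nonneg_left (hpt a) (PP_nonneg K T η r hK0 a T))
    have hlhs : ∑ a : Fin T → Fin K, PP K T η r a T *
          (((T : ℝ) - ∑ t, r t (a t)) - ∑ t : Fin T, lh K T η r a (t : ℕ) i)
        = ((T : ℝ) - ∑ a : Fin T → Fin K, PP K T η r a T * ∑ t, r t (a t))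
            - ((T : ℝ) - ∑ t, r t i) := by
      have hexp : ∀ a : Fin T → Fin K, PP K T η r a T *
            (((T : ℝ) - ∑ t, r t (a t)) - ∑ t : Fin T, lh K T η r a (t : ℕ) i)
          = PP K T η r a T * (T : ℝ) - PP K T η r a T * ∑ t, r t (a t)
              - PP K T η r a T * ∑ t : Fin T, lh K T η r a (t : ℕ) i := by
        intro a; ring
      rw [Finset.sum_congr rfl (fun a _ => hexp a), Finset.sum_sub_distrib,
        Finset.sum_sub_distrib, ← Finset.sum_mul, hE1, hE2 i]
      ring
    have hrhs : ∑ a : Fin T → Fin K, PP K T η r a T *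
          (Real.log K / η
            + η / 2 * ∑ t : Fin T, (1 - r t (a t)) ^ 2 / q K T η r a (t : ℕ) (a t))
        = Real.log K / η + η / 2 * ∑ t : Fin T, ∑ j, (1 - r t j) ^ 2 := by
      have hexp : ∀ a : Fin T → Fin K, PP K T η r a T *
            (Real.log K / η
              + η / 2 * ∑ t : Fin T, (1 - r t (a t)) ^ 2 / q K T η r a (t : ℕ) (a t))
          = PP K T η r a T * (Real.log K / η)
              + η / 2 * (PP K T η r a T *
                ∑ t : Fin T, (1 - r t (a t)) ^ 2 / q K T η r a (t : ℕ) (a t)) := by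
        intro a; ring
      rw [Finset.sum_congr rfl (fun a _ => hexp a), Finset.sum_add_distrib,
        ← Finset.sum_mul, hE1, ← Finset.mul_sum, hE3]
      ring
    have hB : ∑ t : Fin T, ∑ j, (1 - r t j) ^ 2 ≤ (T : ℝ) * K := by
      calc ∑ t : Fin T, ∑ j, (1 - r t j) ^ 2 ≤ ∑ t : Fin T, ∑ j : Fin K, (1 : ℝ) := by
            refine Finset.sum_le_sum (fun t _ => Finset.sum_le_sum (fun j _ => ?_))
            have h1 := (hr t j).1
            have h2 := (hr t j).2
            nlinarith
        _ = (T : ℝ) * K := by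
            simp [Finset.sum_const, Finset.card_univ, mul_comm]
    have hPPa : ∀ a : Fin T → Fin K, P a = PP K T η r a T := hPP
    rw [hlhs, hrhs] at hsum
    have hfin : ∑ a : Fin T → Fin K, P a * ∑ t, r t (a t)
        = ∑ a : Fin T → Fin K, PP K T η r a T * ∑ t, r t (a t) :=
      Finset.sum_congr rfl (fun a _ => by rw [hPPa a])
    rw [hfin]
    nlinarith [hηpos]
  -- the learning-rate algebra
  have hη2 : η ^ 2 = 2 * Real.log K / (K * T) := by
    rw [hη]
    exact Real.sq_sqrt (by positivity)
  have hs : Real.sqrt (2 * T * K * Real.log K) = η * ((T : ℝ) * K) := by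
    rw [show 2 * (T : ℝ) * K * Real.log K = (η * ((T : ℝ) * K)) ^ 2 from by
      rw [mul_pow, hη2]; field_simp]
    exact Real.sqrt_sq (by positivity)
  have hhalf : Real.log K / η = η * ((T : ℝ) * K) / 2 := by
    rw [div_eq_iff (ne_of_gt hηpos)]
    have : η * ((T : ℝ) * K) / 2 * η = η ^ 2 * ((T : ℝ) * K) / 2 := by ring
    rw [this, hη2]
    field_simp
  have hbound : Real.log K / η + η / 2 * ((T : ℝ) * K) = Real.sqrt (2 * T * K * Real.log K) := by
    rw [hs, hhalf]
    ring
  rw [sub_le_iff_le_add]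
  refine Finset.sup'_le _ _ (fun i _ => ?_)
  have := hmain i
  rw [hbound] at this
  linarith
end
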